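/- Let d be a colored (k,l)-partition diagram with m propagating parts. Then d factors uniquely as d = d₁ ∘ d₀ ∘ d₂ where: d₁ is a normally ordered colored upward (k,m)-partition diagram whose propagating parts carry the identity color, d₀ is an element of G(r,m) (a colored permutation diagram on m strands), and d₂ is a normally ordered colored downward (m,l)-partition diagram whose propagating parts carry the identity color. (Uniqueness and existence of this triangular factorization.) -/

import Mathlib

open Relation

/-- The cyclic group of order `r` (multiplicative). -/
abbrev Cr (r : ℕ) := Multiplicative (ZMod r)

/-- A colored `(k,l)`-partition diagram: a set-partition (equivalence relation)
of the `k` top vertices (`Sum.inl`) and `l` bottom vertices (`Sum.inr`),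
together with a color from `C_r` attached to each block. -/
structure CDiag (r k l : ℕ) where
  rel : Setoid (Fin k ⊕ Fin l)
  col : Quotient rel → Cr r

namespace CDiag

/-- Push a setoid forward along a map (equivalence relation generated by the
image relation). -/
def push {α β : Type*} (f : α → β) (s : Setoid α) : Setoid β :=
  Relation.EqvGen.setoid fun x y => ∃ a b, s.r a b ∧ x = f a ∧ y = f b

/-- Top row of the first factor stays on top; its bottom row goes to the middle. -/
def ι₁ {k l m : ℕ} : Fin k ⊕ Fin l → Fin k ⊕ (Fin l ⊕ Fin m) :=
  Sum.map id Sum.inl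

/-- Top row of the second factor goes to the middle; its bottom row stays at the
bottom. -/
def ι₂ {k l m : ℕ} : Fin l ⊕ Fin m → Fin k ⊕ (Fin l ⊕ Fin m) :=
  Sum.inr

/-- The outer (top and bottom) vertices inside the three-row concatenation. -/
def ιo {k l m : ℕ} : Fin k ⊕ Fin m → Fin k ⊕ (Fin l ⊕ Fin m) :=
  Sum.map id Sum.inr

/-- The equivalence relation on the three rows generated by stacking `d₁` on
top of `d₂`. -/
def bigRel {r k l m : ℕ} (d₁ : CDiag r k l) (d₂ : CDiag r l m) :
    Setoid (Fin k ⊕ (Fin l ⊕ Fin m)) :=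
  push (ι₁ (m := m)) d₁.rel ⊔ push (ι₂ (k := k)) d₂.rel

/-- Linear position of a vertex (top row first, then bottom row). -/
def pos {k l : ℕ} : Fin k ⊕ Fin l → ℕ :=
  Sum.elim (fun i => (i : ℕ)) fun j => k + (j : ℕ)

/-- `a` is the canonical (least-position) representative of its block in `d`. -/
def lead {r k l : ℕ} (d : CDiag r k l) (a : Fin k ⊕ Fin l) : Prop :=
  ∀ b, d.rel.r a b → pos a ≤ pos b

/-- Concatenation of colored partition diagrams (all parameters `x_i = 1`):
stack `d₁` on top of `d₂`, identify the bottom row of `d₁` with the top row of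
`d₂`, restrict to the outer rows, color each resulting block by the product of
the colors of all blocks of `d₁` and `d₂` contributing to it, and discard the
components lying entirely in the middle. -/
noncomputable def comp {r k l m : ℕ} (d₁ : CDiag r k l) (d₂ : CDiag r l m) :
    CDiag r k m where
  rel := Setoid.comap ιo (bigRel d₁ d₂)
  col := fun q =>
    (∏ᶠ (a : Fin k ⊕ Fin l)
      (_ : lead d₁ a ∧ (bigRel d₁ d₂).r (ι₁ a) (ιo q.out)),
        d₁.col (Quotient.mk d₁.rel a)) *
    (∏ᶠ (a : Fin l ⊕ Fin m)
      (_ : lead d₂ a ∧ (bigRel d₁ d₂).r (ι₂ a) (ιo q.out)),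
        d₂.col (Quotient.mk d₂.rel a))

/-- The identity diagram: each part `{i, i'}`, all colored by the identity. -/
def idDiag (r k : ℕ) : CDiag r k k :=
  ⟨Relation.EqvGen.setoid fun x y => ∃ i, x = Sum.inl i ∧ y = Sum.inr i,
    fun _ => 1⟩

/-- A block is propagating if it meets both the top and the bottom row. -/
def Propagating {r k l : ℕ} (d : CDiag r k l) (q : Quotient d.rel) : Prop :=
  (∃ i : Fin k, Quotient.mk d.rel (Sum.inl i) = q) ∧
  (∃ j : Fin l, Quotient.mk d.rel (Sum.inr j) = q)

/-- The rank of a colored partition diagram: its number of propagating parts. -/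
noncomputable def rn {r k l : ℕ} (d : CDiag r k l) : ℕ :=
  Nat.card {q : Quotient d.rel // Propagating d q}

end CDiag

open CDiag

/-- `d₀` is a colored permutation diagram on `m` strands: each block is a pair
`{i, σ(i)'}` for a permutation `σ`, with an arbitrary color on each block. -/
def IsPermDiag {r m : ℕ} (d : CDiag r m m) : Prop :=
  ∃ σ : Equiv.Perm (Fin m), ∀ x y, d.rel.r x y ↔
    (x = y ∨ (∃ i, x = Sum.inl i ∧ y = Sum.inr (σ i)) ∨
      (∃ i, y = Sum.inl i ∧ x = Sum.inr (σ i)))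

/-- `j` is the minimal bottom vertex of the block of the top vertex `i`. -/
def IsMinBot {r m l : ℕ} (d : CDiag r m l) (i : Fin m) (j : Fin l) : Prop :=
  d.rel.r (Sum.inl i) (Sum.inr j) ∧
  ∀ j', d.rel.r (Sum.inl i) (Sum.inr j') → j ≤ j'

/-- `j` is the minimal top vertex of the block of the bottom vertex `i`. -/
def IsMinTop {r k m : ℕ} (d : CDiag r k m) (i : Fin m) (j : Fin k) : Prop :=
  d.rel.r (Sum.inr i) (Sum.inl j) ∧
  ∀ j', d.rel.r (Sum.inr i) (Sum.inl j') → j ≤ j'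

/-- A normally ordered colored downward `(m,l)`-partition diagram whose
propagating parts carry the identity color: the `m` top vertices lie in `m`
distinct propagating parts, the parts are normally ordered (ordering the
propagating parts by the minima of their bottom constituents, the `j`-th one
contains top vertex `j`), and all propagating parts have identity color. -/
def IsNormDown {r m l : ℕ} (d : CDiag r m l) : Prop :=
  (∀ i j : Fin m, d.rel.r (Sum.inl i) (Sum.inl j) → i = j) ∧
  (∀ i : Fin m, ∃ j : Fin l, d.rel.r (Sum.inl i) (Sum.inr j)) ∧
  (∀ (i i' : Fin m) (j j' : Fin l),
      IsMinBot d i j → IsMinBot d i' j' → i < i' → j < j') ∧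
  (∀ i : Fin m, d.col (Quotient.mk d.rel (Sum.inl i)) = 1)

/-- A normally ordered colored upward `(k,m)`-partition diagram whose
propagating parts carry the identity color. -/
def IsNormUp {r k m : ℕ} (d : CDiag r k m) : Prop :=
  (∀ i j : Fin m, d.rel.r (Sum.inr i) (Sum.inr j) → i = j) ∧
  (∀ i : Fin m, ∃ j : Fin k, d.rel.r (Sum.inr i) (Sum.inl j)) ∧
  (∀ (i i' : Fin m) (j j' : Fin k),
      IsMinTop d i j → IsMinTop d i' j' → i < i' → j < j') ∧
  (∀ i : Fin m, d.col (Quotient.mk d.rel (Sum.inr i)) = 1)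

namespace CDiag

variable {r k l m : ℕ}

lemma pos_injective {k l : ℕ} : Function.Injective (pos (k := k) (l := l)) := by
  rintro (a | a) (b | b) h <;> simp only [pos, Sum.elim_inl, Sum.elim_inr] at h
  · exact congrArg Sum.inl (Fin.ext h)
  · exact absurd h (by omega)
  · exact absurd h (by omega)
  · exact congrArg Sum.inr (Fin.ext (by omega))

lemma exists_lead (d : CDiag r k l) (x : Fin k ⊕ Fin l) :
    ∃ a, lead d a ∧ d.rel.r a x := by
  obtain ⟨a, ha, hmin⟩ := Set.exists_min_image {b | d.rel.r x b} pos (Set.toFinite _) ⟨x, d.rel.refl x⟩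
  exact ⟨a, fun b hb => hmin b (d.rel.trans ha hb), d.rel.symm ha⟩

lemma lead_unique {d : CDiag r k l} {a b : Fin k ⊕ Fin l} (ha : lead d a) (hb : lead d b)
    (h : d.rel.r a b) : a = b :=
  pos_injective <| le_antisymm (ha b h) (hb a (d.rel.symm h))

lemma ext' {d d' : CDiag r k l} (h : d.rel = d'.rel)
    (h2 : ∀ x, d.col (Quotient.mk d.rel x) = d'.col (Quotient.mk d'.rel x)) : d = d' := by
  obtain ⟨rel, col⟩ := d; obtain ⟨rel', col'⟩ := d'
  dsimp at h; subst h
  simp only [mk.injEq, heq_eq_eq, true_and]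
  funext q; induction q using Quotient.ind with
  | _ x => exact h2 x

lemma ι₁_injective : Function.Injective (ι₁ (k := k) (l := l) (m := m)) :=
  Sum.map_injective.2 ⟨fun _ _ h => h, Sum.inl_injective⟩

lemma ι₂_injective : Function.Injective (ι₂ (k := k) (l := l) (m := m)) :=
  Sum.inr_injective

lemma ιo_injective : Function.Injective (ιo (k := k) (l := l) (m := m)) :=
  Sum.map_injective.2 ⟨fun _ _ h => h, Sum.inr_injective⟩

lemma ι₁_eq_ι₂_iff {a : Fin k ⊕ Fin l} {b : Fin l ⊕ Fin m} :
    ι₁ a = ι₂ (k := k) b ↔ ∃ i, a = Sum.inr i ∧ b = Sum.inl i := by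
  cases a <;> cases b <;> simp [ι₁, ι₂, eq_comm]

lemma ιo_inl : ιo (k := k) (l := l) (m := m) ∘ Sum.inl = ι₁ ∘ Sum.inl := rfl

lemma ιo_inl_apply (a : Fin k) : ιo (l := l) (m := m) (Sum.inl a) = ι₁ (Sum.inl a) := rfl

lemma ιo_inr_apply (b : Fin m) : ιo (k := k) (l := l) (Sum.inr b) = ι₂ (Sum.inr b) := rfl

end CDiag
namespace CDiag

variable {r k l m : ℕ}

/-- Explicit description of `bigRel` when the bottom vertices of `d₁` lie in
distinct blocks and the top vertices of `d₂` lie in distinct blocks. -/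
def midRel (d₁ : CDiag r k l) (d₂ : CDiag r l m) :
    (Fin k ⊕ (Fin l ⊕ Fin m)) → (Fin k ⊕ (Fin l ⊕ Fin m)) → Prop :=
  fun x y =>
    (∃ a b, d₁.rel.r a b ∧ x = ι₁ a ∧ y = ι₁ b) ∨
    (∃ a b, d₂.rel.r a b ∧ x = ι₂ a ∧ y = ι₂ b) ∨
    (∃ a i b, d₁.rel.r a (.inr i) ∧ d₂.rel.r (.inl i) b ∧ x = ι₁ a ∧ y = ι₂ b) ∨
    (∃ a i b, d₁.rel.r a (.inr i) ∧ d₂.rel.r (.inl i) b ∧ x = ι₂ b ∧ y = ι₁ a)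

section
variable {d₁ : CDiag r k l} {d₂ : CDiag r l m}
  (hb : ∀ i j : Fin l, d₁.rel.r (.inr i) (.inr j) → i = j)
  (ht : ∀ i j : Fin l, d₂.rel.r (.inl i) (.inl j) → i = j)

include hb ht

lemma midRel_equivalence : Equivalence (midRel d₁ d₂) := by
  constructor
  · rintro (a | (i | b))
    · exact Or.inl ⟨.inl a, .inl a, d₁.rel.refl _, rfl, rfl⟩
    · exact Or.inl ⟨.inr i, .inr i, d₁.rel.refl _, rfl, rfl⟩
    · exact Or.inr (Or.inl ⟨.inr b, .inr b, d₂.rel.refl _, rfl, rfl⟩)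
  · rintro x y (⟨a, b, h, rfl, rfl⟩ | ⟨a, b, h, rfl, rfl⟩ |
      ⟨a, i, b, h1, h2, rfl, rfl⟩ | ⟨a, i, b, h1, h2, rfl, rfl⟩)
    · exact Or.inl ⟨b, a, d₁.rel.symm h, rfl, rfl⟩
    · exact Or.inr (Or.inl ⟨b, a, d₂.rel.symm h, rfl, rfl⟩)
    · exact Or.inr (Or.inr (Or.inr ⟨a, i, b, h1, h2, rfl, rfl⟩))
    · exact Or.inr (Or.inr (Or.inl ⟨a, i, b, h1, h2, rfl, rfl⟩))
  · rintro x y z (⟨a, b, h, rfl, rfl⟩ | ⟨a, b, h, rfl, rfl⟩ |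
      ⟨a, i, b, h1, h2, rfl, rfl⟩ | ⟨a, i, b, h1, h2, rfl, rfl⟩) <;>
      rintro (⟨a', b', h', he, rfl⟩ | ⟨a', b', h', he, rfl⟩ |
        ⟨a', i', b', h1', h2', he, rfl⟩ | ⟨a', i', b', h1', h2', he, rfl⟩)
    -- (1,1) x = ι₁ a ~ ι₁ b = ι₁ a' ~ ι₁ b'
    · obtain rfl := ι₁_injective he
      exact Or.inl ⟨a, b', d₁.rel.trans h h', rfl, rfl⟩
    -- (1,2) ι₁ b = ι₂ a'
    · obtain ⟨i, rfl, rfl⟩ := ι₁_eq_ι₂_iff.1 he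
      exact Or.inr (Or.inr (Or.inl ⟨a, i, b', h, h', rfl, rfl⟩))
    -- (1,3) ι₁ b = ι₁ a'
    · obtain rfl := ι₁_injective he
      exact Or.inr (Or.inr (Or.inl ⟨a, i', b', d₁.rel.trans h h1', h2', rfl, rfl⟩))
    -- (1,4) ι₁ b = ι₂ b'
    · obtain ⟨j, rfl, rfl⟩ := ι₁_eq_ι₂_iff.1 he
      obtain rfl := ht _ _ h2'
      exact Or.inl ⟨a, a', d₁.rel.trans h (d₁.rel.symm h1'), rfl, rfl⟩
    -- (2,1) ι₂ b = ι₁ a'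
    · obtain ⟨i, rfl, rfl⟩ := ι₁_eq_ι₂_iff.1 he.symm
      exact Or.inr (Or.inr (Or.inr ⟨b', i, a, d₁.rel.symm h', d₂.rel.symm h, rfl, rfl⟩))
    -- (2,2)
    · obtain rfl := ι₂_injective he
      exact Or.inr (Or.inl ⟨a, b', d₂.rel.trans h h', rfl, rfl⟩)
    -- (2,3) ι₂ b = ι₁ a'
    · obtain ⟨i, rfl, rfl⟩ := ι₁_eq_ι₂_iff.1 he.symm
      obtain rfl := hb _ _ h1'
      exact Or.inr (Or.inl ⟨a, b', d₂.rel.trans h h2', rfl, rfl⟩)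
    -- (2,4) ι₂ b = ι₂ b'
    · obtain rfl := ι₂_injective he
      exact Or.inr (Or.inr (Or.inr ⟨a', i', a,
        h1', d₂.rel.trans h2' (d₂.rel.symm h), rfl, rfl⟩))
    -- (3,1) ι₂ b = ι₁ a'
    · obtain ⟨j, rfl, rfl⟩ := ι₁_eq_ι₂_iff.1 he.symm
      obtain rfl := ht _ _ h2
      exact Or.inl ⟨a, b', d₁.rel.trans h1 h', rfl, rfl⟩
    -- (3,2) ι₂ b = ι₂ a'
    · obtain rfl := ι₂_injective he
      exact Or.inr (Or.inr (Or.inl ⟨a, i, b', h1, d₂.rel.trans h2 h', rfl, rfl⟩))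
    -- (3,3) ι₂ b = ι₁ a'
    · obtain ⟨j, rfl, rfl⟩ := ι₁_eq_ι₂_iff.1 he.symm
      obtain rfl := ht _ _ h2
      exact Or.inr (Or.inr (Or.inl ⟨a, i', b', d₁.rel.trans h1 h1', h2', rfl, rfl⟩))
    -- (3,4) ι₂ b = ι₂ b'
    · obtain rfl := ι₂_injective he
      obtain rfl := ht _ _ (d₂.rel.trans h2 (d₂.rel.symm h2'))
      exact Or.inl ⟨a, a', d₁.rel.trans h1 (d₁.rel.symm h1'), rfl, rfl⟩
    -- (4,1) ι₁ a = ι₁ a'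
    · obtain rfl := ι₁_injective he
      exact Or.inr (Or.inr (Or.inr ⟨b', i, b, d₁.rel.trans (d₁.rel.symm h') h1, h2, rfl, rfl⟩))
    -- (4,2) ι₁ a = ι₂ a'
    · obtain ⟨j, rfl, rfl⟩ := ι₁_eq_ι₂_iff.1 he
      obtain rfl := hb _ _ h1
      exact Or.inr (Or.inl ⟨b, b', d₂.rel.trans (d₂.rel.symm h2) h', rfl, rfl⟩)
    -- (4,3) ι₁ a = ι₁ a'
    · obtain rfl := ι₁_injective he
      obtain rfl := hb _ _ (d₁.rel.trans (d₁.rel.symm h1) h1')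
      exact Or.inr (Or.inl ⟨b, b', d₂.rel.trans (d₂.rel.symm h2) h2', rfl, rfl⟩)
    -- (4,4) ι₁ a = ι₂ b'
    · obtain ⟨j, rfl, rfl⟩ := ι₁_eq_ι₂_iff.1 he
      obtain rfl := hb _ _ h1
      obtain rfl := ht _ _ h2'
      exact Or.inr (Or.inr (Or.inr ⟨a', i', b, h1', h2, rfl, rfl⟩))
end

end CDiag
namespace CDiag

variable {r k l m : ℕ}

@[simp] lemma ι₁_inl (a : Fin k) : (ι₁ (Sum.inl a) : Fin k ⊕ (Fin l ⊕ Fin m)) = Sum.inl a := rfl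
@[simp] lemma ι₁_inr (i : Fin l) :
    (ι₁ (Sum.inr i) : Fin k ⊕ (Fin l ⊕ Fin m)) = Sum.inr (Sum.inl i) := rfl
@[simp] lemma ι₂_inl (i : Fin l) :
    (ι₂ (Sum.inl i) : Fin k ⊕ (Fin l ⊕ Fin m)) = Sum.inr (Sum.inl i) := rfl
@[simp] lemma ι₂_inr (b : Fin m) :
    (ι₂ (Sum.inr b) : Fin k ⊕ (Fin l ⊕ Fin m)) = Sum.inr (Sum.inr b) := rfl
@[simp] lemma ιo_inl' (a : Fin k) : (ιo (Sum.inl a) : Fin k ⊕ (Fin l ⊕ Fin m)) = Sum.inl a := rfl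
@[simp] lemma ιo_inr' (b : Fin m) :
    (ιo (Sum.inr b) : Fin k ⊕ (Fin l ⊕ Fin m)) = Sum.inr (Sum.inr b) := rfl

section
variable {d₁ : CDiag r k l} {d₂ : CDiag r l m}

lemma le_bigRel₁ {a b : Fin k ⊕ Fin l} (h : d₁.rel.r a b) :
    (bigRel d₁ d₂).r (ι₁ a) (ι₁ b) :=
  le_sup_left (a := push (ι₁ (m := m)) d₁.rel) (b := push (ι₂ (k := k)) d₂.rel)
    (Relation.EqvGen.rel _ _ ⟨a, b, h, rfl, rfl⟩)

lemma le_bigRel₂ {a b : Fin l ⊕ Fin m} (h : d₂.rel.r a b) :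
    (bigRel d₁ d₂).r (ι₂ a) (ι₂ b) :=
  le_sup_right (a := push (ι₁ (m := m)) d₁.rel) (b := push (ι₂ (k := k)) d₂.rel)
    (Relation.EqvGen.rel _ _ ⟨a, b, h, rfl, rfl⟩)

variable (hb : ∀ i j : Fin l, d₁.rel.r (.inr i) (.inr j) → i = j)
  (ht : ∀ i j : Fin l, d₂.rel.r (.inl i) (.inl j) → i = j)

include hb ht

lemma bigRel_r_iff {x y : Fin k ⊕ (Fin l ⊕ Fin m)} :
    (bigRel d₁ d₂).r x y ↔ midRel d₁ d₂ x y := by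
  constructor
  · intro h
    have hle : bigRel d₁ d₂ ≤ Setoid.mk (midRel d₁ d₂) (midRel_equivalence hb ht) := by
      apply sup_le
      · exact Setoid.eqvGen_le fun u v huv => Or.inl huv
      · exact Setoid.eqvGen_le fun u v huv => Or.inr (Or.inl huv)
    exact hle h
  · rintro (⟨a, b, h, rfl, rfl⟩ | ⟨a, b, h, rfl, rfl⟩ |
      ⟨a, i, b, h1, h2, rfl, rfl⟩ | ⟨a, i, b, h1, h2, rfl, rfl⟩)
    · exact le_bigRel₁ h
    · exact le_bigRel₂ h
    · exact (bigRel d₁ d₂).trans (le_bigRel₁ h1) (le_bigRel₂ h2)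
    · exact (bigRel d₁ d₂).trans ((bigRel d₁ d₂).symm (le_bigRel₂ h2))
        ((bigRel d₁ d₂).symm (le_bigRel₁ h1))

omit hb ht in
lemma comp_rel_iff {x y : Fin k ⊕ Fin m} :
    (comp d₁ d₂).rel.r x y ↔ (bigRel d₁ d₂).r (ιo x) (ιo y) := Iff.rfl

lemma comp_rel_inl_inl {a a' : Fin k} :
    (comp d₁ d₂).rel.r (.inl a) (.inl a') ↔ d₁.rel.r (.inl a) (.inl a') := by
  rw [comp_rel_iff, bigRel_r_iff hb ht]
  constructor
  · rintro (⟨u, v, h, hu, hv⟩ | ⟨u, v, h, hu, hv⟩ |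
      ⟨u, i, v, h1, h2, hu, hv⟩ | ⟨u, i, v, h1, h2, hu, hv⟩) <;>
      (try cases u) <;> (try cases v) <;> simp_all
  · intro h
    exact Or.inl ⟨.inl a, .inl a', h, rfl, rfl⟩

lemma comp_rel_inr_inr {b b' : Fin m} :
    (comp d₁ d₂).rel.r (.inr b) (.inr b') ↔ d₂.rel.r (.inr b) (.inr b') := by
  rw [comp_rel_iff, bigRel_r_iff hb ht]
  constructor
  · rintro (⟨u, v, h, hu, hv⟩ | ⟨u, v, h, hu, hv⟩ |
      ⟨u, i, v, h1, h2, hu, hv⟩ | ⟨u, i, v, h1, h2, hu, hv⟩) <;>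
      (try cases u) <;> (try cases v) <;> simp_all
  · intro h
    exact Or.inr (Or.inl ⟨.inr b, .inr b', h, rfl, rfl⟩)

lemma comp_rel_inl_inr {a : Fin k} {b : Fin m} :
    (comp d₁ d₂).rel.r (.inl a) (.inr b) ↔
      ∃ i, d₁.rel.r (.inl a) (.inr i) ∧ d₂.rel.r (.inl i) (.inr b) := by
  rw [comp_rel_iff, bigRel_r_iff hb ht]
  constructor
  · rintro (⟨u, v, h, hu, hv⟩ | ⟨u, v, h, hu, hv⟩ |
      ⟨u, i, v, h1, h2, hu, hv⟩ | ⟨u, i, v, h1, h2, hu, hv⟩) <;>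
      (try cases u) <;> (try cases v) <;> simp_all
    exact ⟨i, h1, h2⟩
  · rintro ⟨i, h1, h2⟩
    exact Or.inr (Or.inr (Or.inl ⟨.inl a, i, .inr b, h1, h2, rfl, rfl⟩))

end

end CDiag
open scoped Classical in
lemma finprod_cond_eq_single {M α : Type*} [CommMonoid M] {P : α → Prop} (f : α → M)
    (a₀ : α) (h : ∀ a, P a ↔ a = a₀) : (∏ᶠ (a) (_ : P a), f a) = f a₀ := by
  have h1 : ∀ a, (∏ᶠ _ : P a, f a) = if a = a₀ then f a else 1 := by
    intro a
    rw [finprod_eq_if]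
    simp only [h a]
  rw [finprod_congr h1]
  exact finprod_eq_single _ a₀ (fun x hx => if_neg hx) |>.trans (if_pos rfl)

open scoped Classical in
lemma finprod_cond_eq_one {M α : Type*} [CommMonoid M] {P : α → Prop} (f : α → M)
    (h : ∀ a, ¬P a) : (∏ᶠ (a) (_ : P a), f a) = 1 := by
  have h1 : ∀ a, (∏ᶠ _ : P a, f a) = 1 := by
    intro a
    rw [finprod_eq_if, if_neg (h a)]
  rw [finprod_congr h1]
  exact finprod_eq_one_of_forall_eq_one fun _ => rfl

namespace CDiag

variable {r k l m : ℕ}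

lemma col_congr (d : CDiag r k l) {x y : Fin k ⊕ Fin l} (h : d.rel.r x y) :
    d.col (Quotient.mk d.rel x) = d.col (Quotient.mk d.rel y) :=
  congrArg d.col (Quotient.sound h)

section
variable {d₁ : CDiag r k l} {d₂ : CDiag r l m}
  (hb : ∀ i j : Fin l, d₁.rel.r (.inr i) (.inr j) → i = j)
  (ht : ∀ i j : Fin l, d₂.rel.r (.inl i) (.inl j) → i = j)

include hb ht

lemma bigRel_ι₁_inl {u : Fin k ⊕ Fin l} {a : Fin k} :
    (bigRel d₁ d₂).r (ι₁ u) (ι₁ (.inl a)) ↔ d₁.rel.r u (.inl a) := by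
  rw [bigRel_r_iff hb ht]
  constructor
  · rintro (⟨u', v, h, hu, hv⟩ | ⟨u', v, h, hu, hv⟩ |
      ⟨u', i, v, h1, h2, hu, hv⟩ | ⟨u', i, v, h1, h2, hu, hv⟩)
    · obtain rfl := ι₁_injective hu
      cases v <;> simp_all
    · obtain ⟨i, rfl, rfl⟩ := ι₁_eq_ι₂_iff.1 hu
      cases v <;> simp_all
    · cases v <;> simp_all
    · obtain ⟨i', rfl, rfl⟩ := ι₁_eq_ι₂_iff.1 hu
      obtain rfl := ι₁_injective hv
      obtain rfl := ht _ _ h2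
      exact d₁.rel.symm h1
  · intro h
    exact Or.inl ⟨u, .inl a, h, rfl, rfl⟩

lemma bigRel_ι₂_inr {w : Fin l ⊕ Fin m} {b : Fin m} :
    (bigRel d₁ d₂).r (ι₂ w) (ι₂ (.inr b)) ↔ d₂.rel.r w (.inr b) := by
  rw [bigRel_r_iff hb ht]
  constructor
  · rintro (⟨u', v, h, hu, hv⟩ | ⟨u', v, h, hu, hv⟩ |
      ⟨u', i, v, h1, h2, hu, hv⟩ | ⟨u', i, v, h1, h2, hu, hv⟩)
    · obtain ⟨i, rfl, rfl⟩ := ι₁_eq_ι₂_iff.1 hu.symm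
      cases v <;> simp_all
    · obtain rfl := ι₂_injective hu
      obtain rfl := ι₂_injective hv
      exact h
    · obtain ⟨i', rfl, rfl⟩ := ι₁_eq_ι₂_iff.1 hu.symm
      obtain rfl := ι₂_injective hv
      obtain rfl := hb _ _ h1
      exact h2
    · cases u' <;> simp_all
  · intro h
    exact Or.inr (Or.inl ⟨w, .inr b, h, rfl, rfl⟩)

lemma bigRel_ι₂_inl {w : Fin l ⊕ Fin m} {a : Fin k} :
    (bigRel d₁ d₂).r (ι₂ w) (ι₁ (.inl a)) ↔
      ∃ i, d₁.rel.r (.inl a) (.inr i) ∧ d₂.rel.r (.inl i) w := by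
  rw [bigRel_r_iff hb ht]
  constructor
  · rintro (⟨u', v, h, hu, hv⟩ | ⟨u', v, h, hu, hv⟩ |
      ⟨u', i, v, h1, h2, hu, hv⟩ | ⟨u', i, v, h1, h2, hu, hv⟩)
    · obtain ⟨j, rfl, rfl⟩ := ι₁_eq_ι₂_iff.1 hu.symm
      obtain rfl := ι₁_injective hv
      exact ⟨j, d₁.rel.symm h, d₂.rel.refl _⟩
    · cases v <;> simp_all
    · cases v <;> simp_all
    · obtain rfl := ι₂_injective hu
      obtain rfl := ι₁_injective hv
      exact ⟨i, h1, h2⟩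
  · rintro ⟨i, h1, h2⟩
    exact Or.inr (Or.inr (Or.inr ⟨.inl a, i, w, h1, h2, rfl, rfl⟩))

lemma bigRel_ι₁_inr {u : Fin k ⊕ Fin l} {b : Fin m} :
    (bigRel d₁ d₂).r (ι₁ u) (ι₂ (.inr b)) ↔
      ∃ i, d₁.rel.r u (.inr i) ∧ d₂.rel.r (.inl i) (.inr b) := by
  rw [bigRel_r_iff hb ht]
  constructor
  · rintro (⟨u', v, h, hu, hv⟩ | ⟨u', v, h, hu, hv⟩ |
      ⟨u', i, v, h1, h2, hu, hv⟩ | ⟨u', i, v, h1, h2, hu, hv⟩)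
    · cases v <;> simp_all
    · obtain ⟨i, rfl, rfl⟩ := ι₁_eq_ι₂_iff.1 hu
      obtain rfl := ι₂_injective hv
      exact ⟨i, d₁.rel.refl _, h⟩
    · obtain rfl := ι₁_injective hu
      obtain rfl := ι₂_injective hv
      exact ⟨i, h1, h2⟩
    · obtain ⟨j, rfl, rfl⟩ := ι₁_eq_ι₂_iff.1 hu
      cases u' <;> simp_all
  · rintro ⟨i, h1, h2⟩
    exact Or.inr (Or.inr (Or.inl ⟨u, i, .inr b, h1, h2, rfl, rfl⟩))

end

end CDiag
namespace CDiag

variable {r k l m : ℕ}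

section
variable {d₁ : CDiag r k l} {d₂ : CDiag r l m}

lemma comp_col_def (x : Fin k ⊕ Fin m) :
    (comp d₁ d₂).col (Quotient.mk _ x) =
      (∏ᶠ (a : Fin k ⊕ Fin l)
        (_ : lead d₁ a ∧
          (bigRel d₁ d₂).r (ι₁ a) (ιo (Quotient.mk (comp d₁ d₂).rel x).out)),
          d₁.col (Quotient.mk d₁.rel a)) *
      (∏ᶠ (a : Fin l ⊕ Fin m)
        (_ : lead d₂ a ∧
          (bigRel d₁ d₂).r (ι₂ a) (ιo (Quotient.mk (comp d₁ d₂).rel x).out)),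
          d₂.col (Quotient.mk d₂.rel a)) := rfl

variable (hb : ∀ i j : Fin l, d₁.rel.r (.inr i) (.inr j) → i = j)
  (ht : ∀ i j : Fin l, d₂.rel.r (.inl i) (.inl j) → i = j)

include hb ht

lemma comp_col_top_prop {a : Fin k} {i : Fin l} (hi : d₁.rel.r (.inl a) (.inr i)) :
    (comp d₁ d₂).col (Quotient.mk _ (.inl a)) =
      d₁.col (Quotient.mk _ (.inl a)) * d₂.col (Quotient.mk _ (.inl i)) := by
  have hout : (bigRel d₁ d₂).r (ιo (Quotient.mk (comp d₁ d₂).rel (.inl a)).out)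
      (ι₁ (.inl a)) :=
    (Quotient.exact (Quotient.out_eq _) : (comp d₁ d₂).rel.r _ (.inl a))
  obtain ⟨a₀, ha₀, ha₀r⟩ := exists_lead d₁ (.inl a)
  obtain ⟨b₀, hb₀, hb₀r⟩ := exists_lead d₂ (.inl i)
  rw [comp_col_def]
  rw [finprod_cond_eq_single _ a₀, finprod_cond_eq_single _ b₀,
    col_congr d₁ (d₁.rel.symm ha₀r), col_congr d₂ (d₂.rel.symm hb₀r)]
  · intro w
    constructor
    · rintro ⟨hw, hrel⟩
      have h2 : (bigRel d₁ d₂).r (ι₂ w) (ι₁ (.inl a)) := (bigRel d₁ d₂).trans hrel hout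
      obtain ⟨i', h1', h2'⟩ := (bigRel_ι₂_inl hb ht).1 h2
      obtain rfl := hb _ _ (d₁.rel.trans (d₁.rel.symm h1') hi)
      exact lead_unique hw hb₀ (d₂.rel.trans (d₂.rel.symm h2') (d₂.rel.symm hb₀r))
    · rintro rfl
      refine ⟨hb₀, (bigRel d₁ d₂).trans ?_ ((bigRel d₁ d₂).symm hout)⟩
      exact (bigRel_ι₂_inl hb ht).2 ⟨i, hi, d₂.rel.symm hb₀r⟩
  · intro u
    constructor
    · rintro ⟨hu, hrel⟩
      have h2 : (bigRel d₁ d₂).r (ι₁ u) (ι₁ (.inl a)) := (bigRel d₁ d₂).trans hrel hout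
      exact lead_unique hu ha₀
        (d₁.rel.trans ((bigRel_ι₁_inl hb ht).1 h2) (d₁.rel.symm ha₀r))
    · rintro rfl
      exact ⟨ha₀, (bigRel d₁ d₂).trans ((bigRel_ι₁_inl hb ht).2 ha₀r)
        ((bigRel d₁ d₂).symm hout)⟩

lemma comp_col_top_nonprop {a : Fin k} (ha : ¬∃ i, d₁.rel.r (.inl a) (.inr i)) :
    (comp d₁ d₂).col (Quotient.mk _ (.inl a)) = d₁.col (Quotient.mk _ (.inl a)) := by
  have hout : (bigRel d₁ d₂).r (ιo (Quotient.mk (comp d₁ d₂).rel (.inl a)).out)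
      (ι₁ (.inl a)) :=
    (Quotient.exact (Quotient.out_eq _) : (comp d₁ d₂).rel.r _ (.inl a))
  obtain ⟨a₀, ha₀, ha₀r⟩ := exists_lead d₁ (.inl a)
  rw [comp_col_def]
  rw [finprod_cond_eq_single _ a₀, finprod_cond_eq_one, mul_one,
    col_congr d₁ (d₁.rel.symm ha₀r)]
  · rintro w ⟨-, hrel⟩
    have h2 : (bigRel d₁ d₂).r (ι₂ w) (ι₁ (.inl a)) := (bigRel d₁ d₂).trans hrel hout
    obtain ⟨i', h1', -⟩ := (bigRel_ι₂_inl hb ht).1 h2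
    exact ha ⟨i', h1'⟩
  · intro u
    constructor
    · rintro ⟨hu, hrel⟩
      have h2 : (bigRel d₁ d₂).r (ι₁ u) (ι₁ (.inl a)) := (bigRel d₁ d₂).trans hrel hout
      exact lead_unique hu ha₀
        (d₁.rel.trans ((bigRel_ι₁_inl hb ht).1 h2) (d₁.rel.symm ha₀r))
    · rintro rfl
      exact ⟨ha₀, (bigRel d₁ d₂).trans ((bigRel_ι₁_inl hb ht).2 ha₀r)
        ((bigRel d₁ d₂).symm hout)⟩

lemma comp_col_bot_nonprop {b : Fin m} (hbp : ¬∃ i, d₂.rel.r (.inl i) (.inr b)) :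
    (comp d₁ d₂).col (Quotient.mk _ (.inr b)) = d₂.col (Quotient.mk _ (.inr b)) := by
  have hout : (bigRel d₁ d₂).r (ιo (Quotient.mk (comp d₁ d₂).rel (.inr b)).out)
      (ι₂ (.inr b)) :=
    (Quotient.exact (Quotient.out_eq _) : (comp d₁ d₂).rel.r _ (.inr b))
  obtain ⟨b₀, hb₀, hb₀r⟩ := exists_lead d₂ (.inr b)
  rw [comp_col_def]
  rw [finprod_cond_eq_one, finprod_cond_eq_single _ b₀, one_mul,
    col_congr d₂ (d₂.rel.symm hb₀r)]
  · intro w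
    constructor
    · rintro ⟨hw, hrel⟩
      have h2 : (bigRel d₁ d₂).r (ι₂ w) (ι₂ (.inr b)) := (bigRel d₁ d₂).trans hrel hout
      exact lead_unique hw hb₀
        (d₂.rel.trans ((bigRel_ι₂_inr hb ht).1 h2) (d₂.rel.symm hb₀r))
    · rintro rfl
      exact ⟨hb₀, (bigRel d₁ d₂).trans ((bigRel_ι₂_inr hb ht).2 hb₀r)
        ((bigRel d₁ d₂).symm hout)⟩
  · rintro u ⟨-, hrel⟩
    have h2 : (bigRel d₁ d₂).r (ι₁ u) (ι₂ (.inr b)) := (bigRel d₁ d₂).trans hrel hout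
    obtain ⟨i', -, h2'⟩ := (bigRel_ι₁_inr hb ht).1 h2
    exact hbp ⟨i', h2'⟩

end

end CDiag
namespace CDiag

variable {r k l m : ℕ}

/-! ### The three building blocks -/

section defs
variable (d : CDiag r k l)

/-- Relation underlying the normally ordered downward diagram. -/
def downRel (P : Fin m → Quotient d.rel) : (Fin m ⊕ Fin l) → (Fin m ⊕ Fin l) → Prop
  | .inl i, .inl i' => i = i'
  | .inl i, .inr j => Quotient.mk d.rel (.inr j) = P i
  | .inr j, .inl i => Quotient.mk d.rel (.inr j) = P i
  | .inr j, .inr j' => d.rel.r (.inr j) (.inr j')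

open scoped Classical in
/-- Colors for the normally ordered downward diagram. -/
noncomputable def downColFun : Fin m ⊕ Fin l → Cr r :=
  Sum.elim (fun _ => 1)
    (fun j =>
      if Propagating d (Quotient.mk d.rel (.inr j)) then 1
      else d.col (Quotient.mk d.rel (.inr j)))

/-- The normally ordered downward diagram associated to an enumeration `P` of
the propagating blocks of `d`. -/
noncomputable def downOf (P : Fin m → Quotient d.rel) (hP : Function.Injective P) :
    CDiag r m l where
  rel :=
    { r := downRel d P
      iseqv := by
        constructor
        · rintro (i | j)
          · exact rfl
          · exact d.rel.refl _
        · rintro (i | j) (i' | j') h <;> simp only [downRel] at h ⊢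
          · exact h.symm
          · exact h
          · exact h
          · exact d.rel.symm h
        · rintro (i | j) (i' | j') (i'' | j'') h1 h2 <;>
            simp only [downRel] at h1 h2 ⊢
          · exact h1.trans h2
          · exact h1 ▸ h2
          · exact hP (h1.symm.trans h2)
          · exact (Quotient.sound h2).symm.trans h1
          · exact h2 ▸ h1
          · exact Quotient.exact (h1.trans h2.symm)
          · exact (Quotient.sound h1).trans h2
          · exact d.rel.trans h1 h2 }
  col := fun q => downColFun d q.out

/-- Relation underlying the normally ordered upward diagram. -/
def upRel (Q : Fin m → Quotient d.rel) : (Fin k ⊕ Fin m) → (Fin k ⊕ Fin m) → Prop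
  | .inl a, .inl a' => d.rel.r (.inl a) (.inl a')
  | .inl a, .inr i => Quotient.mk d.rel (.inl a) = Q i
  | .inr i, .inl a => Quotient.mk d.rel (.inl a) = Q i
  | .inr i, .inr i' => i = i'

open scoped Classical in
/-- Colors for the normally ordered upward diagram. -/
noncomputable def upColFun : Fin k ⊕ Fin m → Cr r :=
  Sum.elim
    (fun a =>
      if Propagating d (Quotient.mk d.rel (.inl a)) then 1
      else d.col (Quotient.mk d.rel (.inl a)))
    (fun _ => 1)

/-- The normally ordered upward diagram associated to an enumeration `Q` of
the propagating blocks of `d`. -/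
noncomputable def upOf (Q : Fin m → Quotient d.rel) (hQ : Function.Injective Q) :
    CDiag r k m where
  rel :=
    { r := upRel d Q
      iseqv := by
        constructor
        · rintro (a | i)
          · exact d.rel.refl _
          · exact rfl
        · rintro (a | i) (a' | i') h <;> simp only [upRel] at h ⊢
          · exact d.rel.symm h
          · exact h
          · exact h
          · exact h.symm
        · rintro (a | i) (a' | i') (a'' | i'') h1 h2 <;>
            simp only [upRel] at h1 h2 ⊢
          · exact d.rel.trans h1 h2
          · exact (Quotient.sound h1).trans h2
          · exact Quotient.exact (h1.trans h2.symm)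
          · exact h2 ▸ h1
          · exact (Quotient.sound h2).symm.trans h1
          · exact hQ (h1.symm.trans h2)
          · exact h1 ▸ h2
          · exact h1.trans h2 }
  col := fun q => upColFun d q.out

end defs

/-- Relation underlying a colored permutation diagram. -/
def permRel (σ : Equiv.Perm (Fin m)) : (Fin m ⊕ Fin m) → (Fin m ⊕ Fin m) → Prop :=
  fun x y => x = y ∨ (∃ i, x = .inl i ∧ y = .inr (σ i)) ∨ (∃ i, y = .inl i ∧ x = .inr (σ i))

/-- The colored permutation diagram of `σ` with strand colors `c`. -/
noncomputable def permOf (σ : Equiv.Perm (Fin m)) (c : Fin m → Cr r) : CDiag r m m where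
  rel :=
    { r := permRel σ
      iseqv := by
        constructor
        · exact fun x => Or.inl rfl
        · rintro x y (rfl | ⟨i, rfl, rfl⟩ | ⟨i, rfl, rfl⟩)
          · exact Or.inl rfl
          · exact Or.inr (Or.inr ⟨i, rfl, rfl⟩)
          · exact Or.inr (Or.inl ⟨i, rfl, rfl⟩)
        · rintro x y z (rfl | ⟨i, rfl, rfl⟩ | ⟨i, rfl, rfl⟩) h2
          · exact h2
          · rcases h2 with rfl | ⟨i', he, rfl⟩ | ⟨i', rfl, he⟩
            · exact Or.inr (Or.inl ⟨i, rfl, rfl⟩)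
            · exact absurd he (by simp)
            · obtain rfl := σ.injective (Sum.inr.inj he)
              exact Or.inl rfl
          · rcases h2 with rfl | ⟨i', he, rfl⟩ | ⟨i', rfl, he⟩
            · exact Or.inr (Or.inr ⟨i, rfl, rfl⟩)
            · obtain rfl := Sum.inl.inj he
              exact Or.inl rfl
            · exact absurd he (by simp) }
  col := fun q => Sum.elim c (fun j => c (σ.symm j)) q.out

section evals
variable {d : CDiag r k l}

lemma downOf_col_eval {P : Fin m → Quotient d.rel} {hP : Function.Injective P}
    (hprop : ∀ i, Propagating d (P i)) (x : Fin m ⊕ Fin l) :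
    (downOf d P hP).col (Quotient.mk _ x) = downColFun d x := by
  have hconst : ∀ x y : Fin m ⊕ Fin l, downRel d P x y →
      downColFun (r := r) d x = downColFun d y := by
    rintro (i | j) (i' | j') h <;> simp only [downRel] at h
    · rfl
    · have hp : Propagating d (Quotient.mk d.rel (.inr j')) := by rw [h]; exact hprop i
      simp [downColFun, hp]
    · have hp : Propagating d (Quotient.mk d.rel (.inr j)) := by rw [h]; exact hprop i'
      simp [downColFun, hp]
    · have hq : Quotient.mk d.rel (.inr j) = Quotient.mk d.rel (.inr j') := Quotient.sound h
      simp only [downColFun, Sum.elim_inr]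
      rw [hq]
  have hx : (downOf d P hP).rel.r (Quotient.mk (downOf d P hP).rel x).out x :=
    Quotient.exact (Quotient.out_eq _)
  exact hconst _ _ hx

lemma upOf_col_eval {Q : Fin m → Quotient d.rel} {hQ : Function.Injective Q}
    (hprop : ∀ i, Propagating d (Q i)) (x : Fin k ⊕ Fin m) :
    (upOf d Q hQ).col (Quotient.mk _ x) = upColFun d x := by
  have hconst : ∀ x y : Fin k ⊕ Fin m, upRel d Q x y →
      upColFun (r := r) d x = upColFun d y := by
    rintro (a | i) (a' | i') h <;> simp only [upRel] at h
    · have hq : Quotient.mk d.rel (.inl a) = Quotient.mk d.rel (.inl a') := Quotient.sound h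
      simp only [upColFun, Sum.elim_inl]
      rw [hq]
    · have hp : Propagating d (Quotient.mk d.rel (.inl a)) := by rw [h]; exact hprop i'
      simp [upColFun, hp]
    · have hp : Propagating d (Quotient.mk d.rel (.inl a')) := by rw [h]; exact hprop i
      simp [upColFun, hp]
    · rfl
  have hx : (upOf d Q hQ).rel.r (Quotient.mk (upOf d Q hQ).rel x).out x :=
    Quotient.exact (Quotient.out_eq _)
  exact hconst _ _ hx

lemma permOf_col_eval (σ : Equiv.Perm (Fin m)) (c : Fin m → Cr r) (x : Fin m ⊕ Fin m) :
    (permOf (r := r) σ c).col (Quotient.mk _ x) = Sum.elim c (fun j => c (σ.symm j)) x := by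
  have hconst : ∀ x y : Fin m ⊕ Fin m, (permOf (r := r) σ c).rel.r x y →
      Sum.elim c (fun j => c (σ.symm j)) x = Sum.elim c (fun j => c (σ.symm j)) y := by
    rintro x y (rfl | ⟨i, rfl, rfl⟩ | ⟨i, rfl, rfl⟩)
    · rfl
    · simp
    · simp
  have hx : (permOf (r := r) σ c).rel.r (Quotient.mk (permOf (r := r) σ c).rel x).out x :=
    Quotient.exact (Quotient.out_eq _)
  exact hconst _ _ hx

end evals

end CDiag
namespace CDiag

variable {r k l m : ℕ}

section enum
variable (d : CDiag r k l)

open scoped Classical in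
/-- The set of minimal bottom vertices of propagating blocks. -/
noncomputable def botMinSet : Finset (Fin l) :=
  Finset.univ.filter fun j => (∃ a, d.rel.r (.inl a) (.inr j)) ∧
    ∀ j', d.rel.r (.inr j) (.inr j') → j ≤ j'

open scoped Classical in
/-- The set of minimal top vertices of propagating blocks. -/
noncomputable def topMinSet : Finset (Fin k) :=
  Finset.univ.filter fun a => (∃ j, d.rel.r (.inl a) (.inr j)) ∧
    ∀ a', d.rel.r (.inl a) (.inl a') → a ≤ a'

lemma mem_botMinSet {j : Fin l} : j ∈ botMinSet d ↔
    (∃ a, d.rel.r (.inl a) (.inr j)) ∧ ∀ j', d.rel.r (.inr j) (.inr j') → j ≤ j' := by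
  classical simp [botMinSet]

lemma mem_topMinSet {a : Fin k} : a ∈ topMinSet d ↔
    (∃ j, d.rel.r (.inl a) (.inr j)) ∧ ∀ a', d.rel.r (.inl a) (.inl a') → a ≤ a' := by
  classical simp [topMinSet]

noncomputable def botMinSet_equiv : { j // j ∈ botMinSet d } ≃ { q // Propagating d q } := by
  refine Equiv.ofBijective (fun j => ⟨Quotient.mk d.rel (.inr j.1), ?_, ⟨j.1, rfl⟩⟩) ⟨?_, ?_⟩
  · obtain ⟨⟨a, ha⟩, -⟩ := (mem_botMinSet d).1 j.2
    exact ⟨a, Quotient.sound ha⟩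
  · rintro ⟨j, hj⟩ ⟨j', hj'⟩ h
    have hrel : d.rel.r (.inr j) (.inr j') := Quotient.exact (congrArg Subtype.val h)
    obtain ⟨-, h1⟩ := (mem_botMinSet d).1 hj
    obtain ⟨-, h2⟩ := (mem_botMinSet d).1 hj'
    exact Subtype.ext (le_antisymm (h1 _ hrel) (h2 _ (d.rel.symm hrel)))
  · rintro ⟨q, ⟨a, ha⟩, ⟨j, hj⟩⟩
    obtain ⟨j₀, hj₀S, hj₀min⟩ := Set.exists_min_image {j' | d.rel.r (.inr j) (.inr j')} id
      (Set.toFinite _) ⟨j, d.rel.refl _⟩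
    have hj₀mem : j₀ ∈ botMinSet d := by
      rw [mem_botMinSet]
      refine ⟨⟨a, d.rel.trans (Quotient.exact (ha.trans hj.symm)) hj₀S⟩, fun j' hj' => ?_⟩
      exact hj₀min j' (d.rel.trans hj₀S hj')
    exact ⟨⟨j₀, hj₀mem⟩, Subtype.ext ((Quotient.sound (d.rel.symm hj₀S)).trans hj)⟩

noncomputable def topMinSet_equiv : { a // a ∈ topMinSet d } ≃ { q // Propagating d q } := by
  refine Equiv.ofBijective (fun a => ⟨Quotient.mk d.rel (.inl a.1), ⟨a.1, rfl⟩, ?_⟩) ⟨?_, ?_⟩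
  · obtain ⟨⟨j, hj⟩, -⟩ := (mem_topMinSet d).1 a.2
    exact ⟨j, (Quotient.sound hj).symm⟩
  · rintro ⟨a, ha⟩ ⟨a', ha'⟩ h
    have hrel : d.rel.r (.inl a) (.inl a') := Quotient.exact (congrArg Subtype.val h)
    obtain ⟨-, h1⟩ := (mem_topMinSet d).1 ha
    obtain ⟨-, h2⟩ := (mem_topMinSet d).1 ha'
    exact Subtype.ext (le_antisymm (h1 _ hrel) (h2 _ (d.rel.symm hrel)))
  · rintro ⟨q, ⟨a, ha⟩, ⟨j, hj⟩⟩
    obtain ⟨a₀, ha₀S, ha₀min⟩ := Set.exists_min_image {a' | d.rel.r (.inl a) (.inl a')} id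
      (Set.toFinite _) ⟨a, d.rel.refl _⟩
    have ha₀mem : a₀ ∈ topMinSet d := by
      rw [mem_topMinSet]
      refine ⟨⟨j, d.rel.trans (d.rel.symm ha₀S) (Quotient.exact (ha.trans hj.symm))⟩,
        fun a' ha' => ?_⟩
      exact ha₀min a' (d.rel.trans ha₀S ha')
    exact ⟨⟨a₀, ha₀mem⟩, Subtype.ext ((Quotient.sound (d.rel.symm ha₀S)).trans ha)⟩

lemma botMinSet_card : (botMinSet d).card = rn d := by
  rw [← Nat.card_eq_finsetCard]
  exact Nat.card_congr (botMinSet_equiv d)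

lemma topMinSet_card : (topMinSet d).card = rn d := by
  rw [← Nat.card_eq_finsetCard]
  exact Nat.card_congr (topMinSet_equiv d)

section withCard
variable (hB : (botMinSet d).card = m) (hT : (topMinSet d).card = m)

/-- Enumeration of minimal bottom vertices, in increasing order. -/
noncomputable def botEnum : Fin m → Fin l := (botMinSet d).orderEmbOfFin hB

/-- Enumeration of minimal top vertices, in increasing order. -/
noncomputable def topEnum : Fin m → Fin k := (topMinSet d).orderEmbOfFin hT

/-- The `i`-th propagating block, ordered by minimal bottom vertex. -/
noncomputable def botP : Fin m → Quotient d.rel :=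
  fun i => Quotient.mk d.rel (.inr (botEnum d hB i))

/-- The `i`-th propagating block, ordered by minimal top vertex. -/
noncomputable def topQ : Fin m → Quotient d.rel :=
  fun i => Quotient.mk d.rel (.inl (topEnum d hT i))

lemma botEnum_mem (i : Fin m) : botEnum d hB i ∈ botMinSet d :=
  Finset.orderEmbOfFin_mem _ _ _

lemma topEnum_mem (i : Fin m) : topEnum d hT i ∈ topMinSet d :=
  Finset.orderEmbOfFin_mem _ _ _

lemma botP_prop (i : Fin m) : Propagating d (botP d hB i) := by
  obtain ⟨⟨a, ha⟩, -⟩ := (mem_botMinSet d).1 (botEnum_mem d hB i)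
  exact ⟨⟨a, Quotient.sound ha⟩, ⟨_, rfl⟩⟩

lemma topQ_prop (i : Fin m) : Propagating d (topQ d hT i) := by
  obtain ⟨⟨j, hj⟩, -⟩ := (mem_topMinSet d).1 (topEnum_mem d hT i)
  exact ⟨⟨_, rfl⟩, ⟨j, (Quotient.sound hj).symm⟩⟩

lemma botP_inj : Function.Injective (botP d hB) := by
  intro i i' h
  have hrel : d.rel.r (.inr (botEnum d hB i)) (.inr (botEnum d hB i')) := Quotient.exact h
  obtain ⟨-, h1⟩ := (mem_botMinSet d).1 (botEnum_mem d hB i)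
  obtain ⟨-, h2⟩ := (mem_botMinSet d).1 (botEnum_mem d hB i')
  exact ((botMinSet d).orderEmbOfFin hB).injective
    (le_antisymm (h1 _ hrel) (h2 _ (d.rel.symm hrel)))

lemma topQ_inj : Function.Injective (topQ d hT) := by
  intro i i' h
  have hrel : d.rel.r (.inl (topEnum d hT i)) (.inl (topEnum d hT i')) := Quotient.exact h
  obtain ⟨-, h1⟩ := (mem_topMinSet d).1 (topEnum_mem d hT i)
  obtain ⟨-, h2⟩ := (mem_topMinSet d).1 (topEnum_mem d hT i')
  exact ((topMinSet d).orderEmbOfFin hT).injective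
    (le_antisymm (h1 _ hrel) (h2 _ (d.rel.symm hrel)))

lemma botP_surj {q : Quotient d.rel} (hq : Propagating d q) : ∃ i, botP d hB i = q := by
  obtain ⟨⟨j₀, hj₀⟩, he⟩ := (botMinSet_equiv d).surjective ⟨q, hq⟩
  have : j₀ ∈ Set.range (botEnum d hB) := by
    rw [botEnum, Finset.range_orderEmbOfFin]
    exact hj₀
  obtain ⟨i, hi⟩ := this
  refine ⟨i, ?_⟩
  have := congrArg Subtype.val he
  simp only [botMinSet_equiv, Equiv.ofBijective_apply] at this
  rw [botP, hi]
  exact this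

lemma topQ_surj {q : Quotient d.rel} (hq : Propagating d q) : ∃ i, topQ d hT i = q := by
  obtain ⟨⟨a₀, ha₀⟩, he⟩ := (topMinSet_equiv d).surjective ⟨q, hq⟩
  have : a₀ ∈ Set.range (topEnum d hT) := by
    rw [topEnum, Finset.range_orderEmbOfFin]
    exact ha₀
  obtain ⟨i, hi⟩ := this
  refine ⟨i, ?_⟩
  have := congrArg Subtype.val he
  simp only [topMinSet_equiv, Equiv.ofBijective_apply] at this
  rw [topQ, hi]
  exact this

end withCard
end enum

end CDiag
namespace CDiag

variable {r k l m : ℕ}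

section triple
variable (d : CDiag r k l) (hB : (botMinSet d).card = m) (hT : (topMinSet d).card = m)

/-- Enumeration by minimal bottom vertex, as an equivalence. -/
noncomputable def botPe : Fin m ≃ { q // Propagating d q } :=
  Equiv.ofBijective (fun i => ⟨botP d hB i, botP_prop d hB i⟩)
    ⟨fun i i' h => botP_inj d hB (congrArg Subtype.val h),
     fun q => (botP_surj d hB q.2).imp fun i hi => Subtype.ext hi⟩

/-- Enumeration by minimal top vertex, as an equivalence. -/
noncomputable def topQe : Fin m ≃ { q // Propagating d q } :=
  Equiv.ofBijective (fun i => ⟨topQ d hT i, topQ_prop d hT i⟩)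
    ⟨fun i i' h => topQ_inj d hT (congrArg Subtype.val h),
     fun q => (topQ_surj d hT q.2).imp fun i hi => Subtype.ext hi⟩

/-- The permutation matching the two enumerations of propagating blocks. -/
noncomputable def theSigma : Equiv.Perm (Fin m) :=
  (topQe d hT).trans (botPe d hB).symm

lemma theSigma_spec (i : Fin m) : botP d hB (theSigma d hB hT i) = topQ d hT i :=
  congrArg Subtype.val ((botPe d hB).apply_symm_apply (topQe d hT i))

/-- The upward factor. -/
noncomputable def theD₁ : CDiag r k m := upOf d (topQ d hT) (topQ_inj d hT)

/-- The permutation factor. -/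
noncomputable def theD₀ : CDiag r m m :=
  permOf (theSigma d hB hT) fun i => d.col (topQ d hT i)

/-- The downward factor. -/
noncomputable def theD₂ : CDiag r m l := downOf d (botP d hB) (botP_inj d hB)

/-! side conditions for the multiplication lemmas -/

lemma hb₁ : ∀ i j : Fin m, (theD₁ d hT).rel.r (.inr i) (.inr j) → i = j := fun _ _ h => h

lemma ht₂ : ∀ i j : Fin m, (theD₂ d hB).rel.r (.inl i) (.inl j) → i = j := fun _ _ h => h

lemma hb₀ : ∀ i j : Fin m, (theD₀ d hB hT).rel.r (.inr i) (.inr j) → i = j := by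
  rintro i j (h | ⟨i', h1, h2⟩ | ⟨i', h1, h2⟩) <;> simp_all

lemma ht₀ : ∀ i j : Fin m, (theD₀ d hB hT).rel.r (.inl i) (.inl j) → i = j := by
  rintro i j (h | ⟨i', h1, h2⟩ | ⟨i', h1, h2⟩) <;> simp_all

lemma hte : ∀ i j : Fin m,
    (comp (theD₀ d hB hT) (theD₂ d hB)).rel.r (.inl i) (.inl j) → i = j := fun i j h =>
  ht₀ d hB hT i j ((comp_rel_inl_inl (hb₀ d hB hT) (ht₂ d hB)).1 h)

lemma perm_rel_inl_inr {σ : Equiv.Perm (Fin m)} {c : Fin m → Cr r} {i u : Fin m} :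
    (permOf σ c).rel.r (.inl i) (.inr u) ↔ u = σ i := by
  constructor
  · rintro (h | ⟨i', h1, h2⟩ | ⟨i', h1, h2⟩) <;> simp_all
  · rintro rfl
    exact Or.inr (Or.inl ⟨i, rfl, rfl⟩)

/-! relation of the inner composition -/

lemma he_top {i : Fin m} {b : Fin l} :
    (comp (theD₀ d hB hT) (theD₂ d hB)).rel.r (.inl i) (.inr b) ↔
      Quotient.mk d.rel (.inr b) = topQ d hT i := by
  rw [comp_rel_inl_inr (hb₀ d hB hT) (ht₂ d hB)]
  constructor
  · rintro ⟨u, h1, h2⟩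
    obtain rfl := perm_rel_inl_inr.1 h1
    exact (h2 : Quotient.mk d.rel (.inr b) = botP d hB _).trans (theSigma_spec d hB hT i)
  · intro h
    exact ⟨theSigma d hB hT i, perm_rel_inl_inr.2 rfl,
      (h.trans (theSigma_spec d hB hT i).symm : _)⟩

lemma he_bot {b b' : Fin l} :
    (comp (theD₀ d hB hT) (theD₂ d hB)).rel.r (.inr b) (.inr b') ↔
      d.rel.r (.inr b) (.inr b') := by
  rw [comp_rel_inr_inr (hb₀ d hB hT) (ht₂ d hB)]
  exact Iff.rfl

/-! relation of the outer composition -/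

lemma hD_tt {a a' : Fin k} :
    (comp (theD₁ d hT) (comp (theD₀ d hB hT) (theD₂ d hB))).rel.r (.inl a) (.inl a') ↔
      d.rel.r (.inl a) (.inl a') := by
  rw [comp_rel_inl_inl (hb₁ d hT) (hte d hB hT)]
  exact Iff.rfl

lemma hD_bb {b b' : Fin l} :
    (comp (theD₁ d hT) (comp (theD₀ d hB hT) (theD₂ d hB))).rel.r (.inr b) (.inr b') ↔
      d.rel.r (.inr b) (.inr b') := by
  rw [comp_rel_inr_inr (hb₁ d hT) (hte d hB hT)]
  exact he_bot d hB hT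

lemma hD_tb {a : Fin k} {b : Fin l} :
    (comp (theD₁ d hT) (comp (theD₀ d hB hT) (theD₂ d hB))).rel.r (.inl a) (.inr b) ↔
      d.rel.r (.inl a) (.inr b) := by
  rw [comp_rel_inl_inr (hb₁ d hT) (hte d hB hT)]
  constructor
  · rintro ⟨i, h1, h2⟩
    have h1' : Quotient.mk d.rel (.inl a) = topQ d hT i := h1
    have h2' := (he_top d hB hT).1 h2
    exact Quotient.exact (h1'.trans h2'.symm)
  · intro h
    have hp : Propagating d (Quotient.mk d.rel (.inl a)) :=
      ⟨⟨a, rfl⟩, ⟨b, (Quotient.sound h).symm⟩⟩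
    obtain ⟨i, hi⟩ := topQ_surj d hT hp
    exact ⟨i, (hi.symm : _), (he_top d hB hT).2 ((Quotient.sound h).symm.trans hi.symm)⟩

lemma theRel_eq :
    (comp (theD₁ d hT) (comp (theD₀ d hB hT) (theD₂ d hB))).rel = d.rel := by
  apply Setoid.ext
  rintro (a | b) (a' | b')
  · exact hD_tt d hB hT
  · exact hD_tb d hB hT
  · constructor
    · intro h
      exact d.rel.symm ((hD_tb d hB hT).1
        ((comp (theD₁ d hT) (comp (theD₀ d hB hT) (theD₂ d hB))).rel.symm h))
    · intro h
      exact (comp (theD₁ d hT) (comp (theD₀ d hB hT) (theD₂ d hB))).rel.symm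
        ((hD_tb d hB hT).2 (d.rel.symm h))
  · exact hD_bb d hB hT

end triple

end CDiag
namespace CDiag

variable {r k l m : ℕ}

section triple2
variable (d : CDiag r k l) (hB : (botMinSet d).card = m) (hT : (topMinSet d).card = m)

lemma theCol_top (a : Fin k) :
    (comp (theD₁ d hT) (comp (theD₀ d hB hT) (theD₂ d hB))).col (Quotient.mk _ (.inl a)) =
      d.col (Quotient.mk _ (.inl a)) := by
  by_cases hp : Propagating d (Quotient.mk d.rel (.inl a))
  · obtain ⟨i, hi⟩ := topQ_surj d hT hp
    have h₁rel : (theD₁ d hT).rel.r (.inl a) (.inr i) := (hi.symm : _)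
    rw [comp_col_top_prop (hb₁ d hT) (hte d hB hT) h₁rel]
    have h₀rel : (theD₀ d hB hT).rel.r (.inl i) (.inr (theSigma d hB hT i)) :=
      perm_rel_inl_inr.2 rfl
    rw [comp_col_top_prop (hb₀ d hB hT) (ht₂ d hB) h₀rel]
    have e1 : (theD₁ d hT).col (Quotient.mk _ (.inl a)) = 1 := by
      rw [theD₁, upOf_col_eval (topQ_prop d hT)]
      simp [upColFun, hp]
    have e2 : (theD₀ d hB hT).col (Quotient.mk _ (.inl i)) = d.col (topQ d hT i) := by
      rw [theD₀, permOf_col_eval]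
      rfl
    have e3 : (theD₂ d hB).col (Quotient.mk _ (.inl (theSigma d hB hT i))) = 1 := by
      rw [theD₂, downOf_col_eval (botP_prop d hB)]
      rfl
    rw [e1, e2, e3, one_mul, mul_one, hi]
  · have hne : ¬∃ i, (theD₁ d hT).rel.r (.inl a) (.inr i) := by
      rintro ⟨i, hi⟩
      exact hp ((hi : Quotient.mk d.rel (.inl a) = topQ d hT i) ▸ topQ_prop d hT i)
    rw [comp_col_top_nonprop (hb₁ d hT) (hte d hB hT) hne]
    rw [theD₁, upOf_col_eval (topQ_prop d hT)]
    simp [upColFun, hp]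

lemma theComp_eq :
    comp (theD₁ d hT) (comp (theD₀ d hB hT) (theD₂ d hB)) = d := by
  apply ext' (theRel_eq d hB hT)
  rintro (a | b)
  · exact theCol_top d hB hT a
  · by_cases hp : Propagating d (Quotient.mk d.rel (.inr b))
    · obtain ⟨⟨a, ha⟩, -⟩ := hp
      have hd : d.rel.r (.inl a) (.inr b) := Quotient.exact ha
      have hD : (comp (theD₁ d hT) (comp (theD₀ d hB hT) (theD₂ d hB))).rel.r
          (.inl a) (.inr b) := (hD_tb d hB hT).2 hd
      rw [← col_congr _ hD, theCol_top d hB hT a, col_congr d hd]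
    · have hne : ¬∃ i, (comp (theD₀ d hB hT) (theD₂ d hB)).rel.r (.inl i) (.inr b) := by
        rintro ⟨i, hi⟩
        exact hp (((he_top d hB hT).1 hi) ▸ topQ_prop d hT i)
      rw [comp_col_bot_nonprop (hb₁ d hT) (hte d hB hT) hne]
      have hne₂ : ¬∃ i, (theD₂ d hB).rel.r (.inl i) (.inr b) := by
        rintro ⟨i, hi⟩
        exact hp ((hi : Quotient.mk d.rel (.inr b) = botP d hB i) ▸ botP_prop d hB i)
      rw [comp_col_bot_nonprop (hb₀ d hB hT) (ht₂ d hB) hne₂]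
      rw [theD₂, downOf_col_eval (botP_prop d hB)]
      simp [downColFun, hp]

/-! ### normal ordering of the factors -/

lemma theD₂_isMinBot_iff {i : Fin m} {j : Fin l} :
    IsMinBot (theD₂ d hB) i j ↔ j = botEnum d hB i := by
  have hmem := (mem_botMinSet d).1 (botEnum_mem d hB i)
  constructor
  · rintro ⟨h, hmin⟩
    have h' : Quotient.mk d.rel (.inr j) = botP d hB i := h
    have h1 : j ≤ botEnum d hB i := hmin _ (rfl : Quotient.mk d.rel _ = botP d hB i)
    have h2 : botEnum d hB i ≤ j := hmem.2 j (d.rel.symm (Quotient.exact h'))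
    exact le_antisymm h1 h2
  · rintro rfl
    refine ⟨(rfl : Quotient.mk d.rel _ = botP d hB i), fun j' hj' => ?_⟩
    exact hmem.2 j' (Quotient.exact (hj' : Quotient.mk d.rel (.inr j') = botP d hB i).symm)

lemma theD₁_isMinTop_iff {i : Fin m} {j : Fin k} :
    IsMinTop (theD₁ d hT) i j ↔ j = topEnum d hT i := by
  have hmem := (mem_topMinSet d).1 (topEnum_mem d hT i)
  constructor
  · rintro ⟨h, hmin⟩
    have h' : Quotient.mk d.rel (.inl j) = topQ d hT i := h
    have h1 : j ≤ topEnum d hT i := hmin _ (rfl : Quotient.mk d.rel _ = topQ d hT i)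
    have h2 : topEnum d hT i ≤ j := hmem.2 j (Quotient.exact h'.symm)
    exact le_antisymm h1 h2
  · rintro rfl
    refine ⟨(rfl : Quotient.mk d.rel _ = topQ d hT i), fun j' hj' => ?_⟩
    exact hmem.2 j' (d.rel.symm
      (Quotient.exact (hj' : Quotient.mk d.rel (.inl j') = topQ d hT i)))

lemma theD₂_isNormDown : IsNormDown (theD₂ d hB) := by
  refine ⟨ht₂ d hB, fun i => ⟨botEnum d hB i, (rfl : Quotient.mk d.rel _ = botP d hB i)⟩,
    fun i i' j j' h h' hii => ?_, fun i => ?_⟩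
  · obtain rfl := (theD₂_isMinBot_iff d hB).1 h
    obtain rfl := (theD₂_isMinBot_iff d hB).1 h'
    exact ((botMinSet d).orderEmbOfFin hB).strictMono hii
  · rw [theD₂, downOf_col_eval (botP_prop d hB)]
    rfl

lemma theD₁_isNormUp : IsNormUp (theD₁ d hT) := by
  refine ⟨hb₁ d hT, fun i => ⟨topEnum d hT i, (rfl : Quotient.mk d.rel _ = topQ d hT i)⟩,
    fun i i' j j' h h' hii => ?_, fun i => ?_⟩
  · obtain rfl := (theD₁_isMinTop_iff d hT).1 h
    obtain rfl := (theD₁_isMinTop_iff d hT).1 h'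
    exact ((topMinSet d).orderEmbOfFin hT).strictMono hii
  · rw [theD₁, upOf_col_eval (topQ_prop d hT)]
    rfl

lemma theD₀_isPermDiag : IsPermDiag (theD₀ d hB hT) :=
  ⟨theSigma d hB hT, fun _ _ => Iff.rfl⟩

end triple2

end CDiag
namespace CDiag

variable {r k l m : ℕ}

lemma triple_unique (d : CDiag r k l) (hB : (botMinSet d).card = m)
    (hT : (topMinSet d).card = m)
    (d₁' : CDiag r k m) (d₀' : CDiag r m m) (d₂' : CDiag r m l)
    (hN1 : IsNormUp d₁') (hN0 : IsPermDiag d₀') (hN2 : IsNormDown d₂')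
    (hc : comp d₁' (comp d₀' d₂') = d) :
    d₁' = theD₁ d hT ∧ d₀' = theD₀ d hB hT ∧ d₂' = theD₂ d hB := by
  obtain ⟨σ', hσ'⟩ := hN0
  obtain ⟨hb₁', hex₁, hmono₁, hcol₁⟩ := hN1
  obtain ⟨ht₂', hex₂, hmono₂, hcol₂⟩ := hN2
  -- side conditions
  have hb₀' : ∀ i j : Fin m, d₀'.rel.r (.inr i) (.inr j) → i = j := by
    intro i j h
    rcases (hσ' _ _).1 h with h | ⟨i', h1, h2⟩ | ⟨i', h1, h2⟩
    · exact Sum.inr.inj h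
    · simp at h1
    · simp at h1
  have ht₀' : ∀ i j : Fin m, d₀'.rel.r (.inl i) (.inl j) → i = j := by
    intro i j h
    rcases (hσ' _ _).1 h with h | ⟨i', h1, h2⟩ | ⟨i', h1, h2⟩
    · exact Sum.inl.inj h
    · simp at h2
    · simp at h2
  have perm' : ∀ i u : Fin m, d₀'.rel.r (.inl i) (.inr u) ↔ u = σ' i := by
    intro i u
    rw [hσ']
    constructor
    · rintro (h | ⟨i', h1, h2⟩ | ⟨i', h1, h2⟩)
      · simp at h
      · obtain rfl := Sum.inl.inj h1
        exact Sum.inr.inj h2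
      · simp at h1
    · rintro rfl
      exact Or.inr (Or.inl ⟨i, rfl, rfl⟩)
  have hte' : ∀ i j : Fin m, (comp d₀' d₂').rel.r (.inl i) (.inl j) → i = j :=
    fun i j h => ht₀' i j ((comp_rel_inl_inl hb₀' ht₂').1 h)
  have hrel : (comp d₁' (comp d₀' d₂')).rel = d.rel := congrArg CDiag.rel hc
  -- relation transfer
  have R1 : ∀ (a a' : Fin k), d.rel.r (.inl a) (.inl a') ↔ d₁'.rel.r (.inl a) (.inl a') := by
    intro a a'
    rw [← hrel]
    exact comp_rel_inl_inl hb₁' hte'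
  have R2 : ∀ (b b' : Fin l), d.rel.r (.inr b) (.inr b') ↔ d₂'.rel.r (.inr b) (.inr b') := by
    intro b b'
    rw [← hrel]
    rw [comp_rel_inr_inr hb₁' hte']
    exact comp_rel_inr_inr hb₀' ht₂'
  have Re : ∀ (i : Fin m) (b : Fin l), (comp d₀' d₂').rel.r (.inl i) (.inr b) ↔
      d₂'.rel.r (.inl (σ' i)) (.inr b) := by
    intro i b
    rw [comp_rel_inl_inr hb₀' ht₂']
    constructor
    · rintro ⟨u, h1, h2⟩
      obtain rfl := (perm' _ _).1 h1
      exact h2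
    · intro h
      exact ⟨σ' i, (perm' _ _).2 rfl, h⟩
  have R3 : ∀ (a : Fin k) (b : Fin l), d.rel.r (.inl a) (.inr b) ↔
      ∃ i, d₁'.rel.r (.inl a) (.inr i) ∧ d₂'.rel.r (.inl (σ' i)) (.inr b) := by
    intro a b
    rw [← hrel, comp_rel_inl_inr hb₁' hte']
    exact exists_congr fun i => and_congr_right fun _ => Re i b
  -- chosen top representatives
  set av : Fin m → Fin k := fun i => (hex₁ i).choose with hav
  have ha : ∀ i, d₁'.rel.r (.inr i) (.inl (av i)) := fun i => (hex₁ i).choose_spec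
  set Q' : Fin m → Quotient d.rel := fun i => Quotient.mk d.rel (.inl (av i)) with hQ'def
  set bv : Fin m → Fin l := fun i => (hex₂ i).choose with hbv
  have hb : ∀ i, d₂'.rel.r (.inl i) (.inr (bv i)) := fun i => (hex₂ i).choose_spec
  set P' : Fin m → Quotient d.rel := fun i => Quotient.mk d.rel (.inr (bv i)) with hP'def
  -- block transfer
  have F1 : ∀ (i : Fin m) (a : Fin k), d₁'.rel.r (.inr i) (.inl a) ↔
      Quotient.mk d.rel (.inl a) = Q' i := by
    intro i a
    constructor
    · intro h
      have h2 : d₁'.rel.r (.inl (av i)) (.inl a) := d₁'.rel.trans (d₁'.rel.symm (ha i)) h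
      exact (Quotient.sound (d.rel.symm ((R1 _ _).2 h2)))
    · intro h
      have h2 : d.rel.r (.inl a) (.inl (av i)) := Quotient.exact h
      exact d₁'.rel.trans (ha i) (d₁'.rel.symm ((R1 _ _).1 h2))
  have G1 : ∀ (i : Fin m) (b : Fin l), d₂'.rel.r (.inl i) (.inr b) ↔
      Quotient.mk d.rel (.inr b) = P' i := by
    intro i b
    constructor
    · intro h
      have h2 : d₂'.rel.r (.inr (bv i)) (.inr b) := d₂'.rel.trans (d₂'.rel.symm (hb i)) h
      exact Quotient.sound (d.rel.symm ((R2 _ _).2 h2))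
    · intro h
      have h2 : d.rel.r (.inr b) (.inr (bv i)) := Quotient.exact h
      exact d₂'.rel.trans (hb i) (d₂'.rel.symm ((R2 _ _).1 h2))
  -- propagating, and cross-block relation
  have hcross : ∀ i, d.rel.r (.inl (av i)) (.inr (bv (σ' i))) :=
    fun i => (R3 _ _).2 ⟨i, d₁'.rel.symm (ha i), hb (σ' i)⟩
  have F2 : ∀ i, Propagating d (Q' i) :=
    fun i => ⟨⟨av i, rfl⟩, ⟨bv (σ' i), (Quotient.sound (hcross i)).symm⟩⟩
  have G2 : ∀ i, Propagating d (P' i) := by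
    intro i
    refine ⟨⟨av (σ'.symm i), ?_⟩, ⟨bv i, rfl⟩⟩
    have := hcross (σ'.symm i)
    rw [σ'.apply_symm_apply] at this
    exact Quotient.sound this
  -- minimal top vertices
  have minTop_ex : ∀ i, ∃ j, IsMinTop d₁' i j := by
    intro i
    obtain ⟨j₀, hj₀, hmin⟩ := Set.exists_min_image {a | d₁'.rel.r (.inr i) (.inl a)} id
      (Set.toFinite _) ⟨av i, ha i⟩
    exact ⟨j₀, hj₀, fun j' hj' => hmin j' hj'⟩
  set f : Fin m → Fin k := fun i => (minTop_ex i).choose with hfdef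
  have hf : ∀ i, IsMinTop d₁' i (f i) := fun i => (minTop_ex i).choose_spec
  have F4 : ∀ i, f i ∈ topMinSet d ∧ Quotient.mk d.rel (.inl (f i)) = Q' i := by
    intro i
    have hfi : Quotient.mk d.rel (.inl (f i)) = Q' i := (F1 _ _).1 (hf i).1
    refine ⟨(mem_topMinSet d).2 ⟨⟨bv (σ' i), ?_⟩, fun a' haa => ?_⟩, hfi⟩
    · exact Quotient.exact (hfi.trans (Quotient.sound (hcross i)))
    · exact (hf i).2 a' (d₁'.rel.trans (hf i).1 ((R1 _ _).1 haa))
  have F5 : f = topEnum d hT := by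
    refine Finset.orderEmbOfFin_unique hT (fun i => (F4 i).1) ?_
    intro i i' hii
    exact hmono₁ i i' (f i) (f i') (hf i) (hf i') hii
  have F6 : ∀ i, Q' i = topQ d hT i := by
    intro i
    rw [← (F4 i).2, topQ, ← congrFun F5 i]
  -- minimal bottom vertices
  have minBot_ex : ∀ i, ∃ j, IsMinBot d₂' i j := by
    intro i
    obtain ⟨j₀, hj₀, hmin⟩ := Set.exists_min_image {b | d₂'.rel.r (.inl i) (.inr b)} id
      (Set.toFinite _) ⟨bv i, hb i⟩
    exact ⟨j₀, hj₀, fun j' hj' => hmin j' hj'⟩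
  set g : Fin m → Fin l := fun i => (minBot_ex i).choose with hgdef
  have hg : ∀ i, IsMinBot d₂' i (g i) := fun i => (minBot_ex i).choose_spec
  have G4 : ∀ i, g i ∈ botMinSet d ∧ Quotient.mk d.rel (.inr (g i)) = P' i := by
    intro i
    have hgi : Quotient.mk d.rel (.inr (g i)) = P' i := (G1 _ _).1 (hg i).1
    refine ⟨(mem_botMinSet d).2 ⟨⟨av (σ'.symm i), ?_⟩, fun b' hbb => ?_⟩, hgi⟩
    · have := hcross (σ'.symm i)
      rw [σ'.apply_symm_apply] at this
      exact Quotient.exact ((Quotient.sound this).trans hgi.symm)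
    · exact (hg i).2 b' (d₂'.rel.trans (hg i).1 ((R2 _ _).1 hbb))
  have G5 : g = botEnum d hB := by
    refine Finset.orderEmbOfFin_unique hB (fun i => (G4 i).1) ?_
    intro i i' hii
    exact hmono₂ i i' (g i) (g i') (hg i) (hg i') hii
  have G6 : ∀ i, P' i = botP d hB i := by
    intro i
    rw [← (G4 i).2, botP, ← congrFun G5 i]
  -- the permutations agree
  have hσσ : σ' = theSigma d hB hT := by
    apply Equiv.ext
    intro i
    apply botP_inj d hB
    rw [theSigma_spec d hB hT i, ← G6, ← F6]
    exact ((G1 _ _).1 (hb (σ' i))).symm.trans (Quotient.sound (hcross i)).symm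
  -- relations agree
  have hrel₁ : d₁'.rel = (theD₁ d hT).rel := by
    apply Setoid.ext
    rintro (a | i) (a' | i')
    · exact ((R1 a a').symm : _)
    · rw [show (theD₁ d hT).rel.r (.inl a) (.inr i') ↔
          Quotient.mk d.rel (.inl a) = topQ d hT i' from Iff.rfl, ← F6]
      constructor
      · intro h
        exact (F1 _ _).1 (d₁'.rel.symm h)
      · intro h
        exact d₁'.rel.symm ((F1 _ _).2 h)
    · rw [show (theD₁ d hT).rel.r (.inr i) (.inl a') ↔
          Quotient.mk d.rel (.inl a') = topQ d hT i from Iff.rfl, ← F6]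
      exact F1 i a'
    · constructor
      · exact hb₁' i i'
      · rintro (h : i = i')
        exact h ▸ d₁'.rel.refl _
  have hrel₂ : d₂'.rel = (theD₂ d hB).rel := by
    apply Setoid.ext
    rintro (i | b) (i' | b')
    · constructor
      · exact ht₂' i i'
      · rintro (h : i = i')
        exact h ▸ d₂'.rel.refl _
    · rw [show (theD₂ d hB).rel.r (.inl i) (.inr b') ↔
          Quotient.mk d.rel (.inr b') = botP d hB i from Iff.rfl, ← G6]
      exact G1 i b'
    · rw [show (theD₂ d hB).rel.r (.inr b) (.inl i') ↔
          Quotient.mk d.rel (.inr b) = botP d hB i' from Iff.rfl, ← G6]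
      constructor
      · intro h
        exact (G1 _ _).1 (d₂'.rel.symm h)
      · intro h
        exact d₂'.rel.symm ((G1 _ _).2 h)
    · exact ((R2 b b').symm : _)
  have hrel₀ : d₀'.rel = (theD₀ d hB hT).rel := by
    apply Setoid.ext
    intro x y
    rw [hσ' x y, hσσ]
    exact Iff.rfl
  -- colors
  have hcolD₁ : ∀ x, d₁'.col (Quotient.mk d₁'.rel x) =
      (theD₁ d hT).col (Quotient.mk (theD₁ d hT).rel x) := by
    rintro (a | i)
    · rw [theD₁, upOf_col_eval (topQ_prop d hT)]
      by_cases hp : Propagating d (Quotient.mk d.rel (.inl a))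
      · obtain ⟨i, hi⟩ := topQ_surj d hT hp
        have h1 : d₁'.rel.r (.inr i) (.inl a) := (F1 i a).2 (by rw [F6, hi])
        rw [← col_congr d₁' h1, hcol₁ i]
        simp [upColFun, hp]
      · have hne : ¬∃ i, d₁'.rel.r (.inl a) (.inr i) := by
          rintro ⟨i, hi⟩
          refine hp ?_
          rw [show Quotient.mk d.rel (.inl a) = Q' i from (F1 _ _).1 (d₁'.rel.symm hi), F6]
          exact topQ_prop d hT i
        have := comp_col_top_nonprop hb₁' hte' hne
        rw [hc] at this
        rw [← this]
        simp [upColFun, hp]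
    · rw [hcol₁ i, theD₁, upOf_col_eval (topQ_prop d hT)]
      rfl
  have hcolD₂ : ∀ x, d₂'.col (Quotient.mk d₂'.rel x) =
      (theD₂ d hB).col (Quotient.mk (theD₂ d hB).rel x) := by
    rintro (i | b)
    · rw [hcol₂ i, theD₂, downOf_col_eval (botP_prop d hB)]
      rfl
    · rw [theD₂, downOf_col_eval (botP_prop d hB)]
      by_cases hp : Propagating d (Quotient.mk d.rel (.inr b))
      · obtain ⟨i, hi⟩ := botP_surj d hB hp
        have h1 : d₂'.rel.r (.inl i) (.inr b) := (G1 i b).2 (by rw [G6, hi])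
        rw [col_congr d₂' (d₂'.rel.symm h1), hcol₂ i]
        simp [downColFun, hp]
      · have hne : ¬∃ i, (comp d₀' d₂').rel.r (.inl i) (.inr b) := by
          rintro ⟨i, hi⟩
          refine hp ?_
          rw [show Quotient.mk d.rel (.inr b) = P' (σ' i) from (G1 _ _).1 ((Re _ _).1 hi), G6]
          exact botP_prop d hB _
        have hne₂ : ¬∃ i, d₂'.rel.r (.inl i) (.inr b) := by
          rintro ⟨i, hi⟩
          refine hp ?_
          rw [show Quotient.mk d.rel (.inr b) = P' i from (G1 _ _).1 hi, G6]
          exact botP_prop d hB _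
        have h1 := comp_col_bot_nonprop hb₁' hte' hne
        have h2 := comp_col_bot_nonprop hb₀' ht₂' hne₂
        rw [hc] at h1
        rw [h2] at h1
        rw [← h1]
        simp [downColFun, hp]
  have hcolD₀ : ∀ x, d₀'.col (Quotient.mk d₀'.rel x) =
      (theD₀ d hB hT).col (Quotient.mk (theD₀ d hB hT).rel x) := by
    have key : ∀ i : Fin m, d₀'.col (Quotient.mk d₀'.rel (.inl i)) = d.col (topQ d hT i) := by
      intro i
      have h1 := comp_col_top_prop hb₁' hte' (d₁'.rel.symm (ha i))
      have h2 := comp_col_top_prop hb₀' ht₂' ((perm' i (σ' i)).2 rfl)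
      rw [hc] at h1
      have hone : d₁'.col (Quotient.mk d₁'.rel (.inl (av i))) = 1 :=
        (col_congr d₁' (ha i)).symm.trans (hcol₁ i)
      rw [h2, hone, hcol₂ (σ' i), mul_one, one_mul] at h1
      rw [← h1, ← F6]
    rintro (i | u)
    · rw [key i, theD₀, permOf_col_eval]
      rfl
    · have h1 : d₀'.rel.r (.inl (σ'.symm u)) (.inr u) :=
        (perm' _ _).2 (σ'.apply_symm_apply u).symm
      rw [← col_congr d₀' h1, key, theD₀, permOf_col_eval]
      show d.col (topQ d hT (σ'.symm u)) = d.col (topQ d hT ((theSigma d hB hT).symm u))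
      rw [← hσσ]
  exact ⟨ext' hrel₁ hcolD₁, ext' hrel₀ hcolD₀, ext' hrel₂ hcolD₂⟩

end CDiag
/-- Triangular factorization: every colored `(k,l)`-partition diagram `d` with
`m` propagating parts factors uniquely as `d = d₁ ∘ d₀ ∘ d₂` with `d₁` a
normally ordered colored upward diagram, `d₀ ∈ G(r,m)` a colored permutation
diagram, and `d₂` a normally ordered colored downward diagram, the propagating
parts of `d₁` and `d₂` carrying the identity color. -/
theorem triangular_factorization (r k l m : ℕ) (d : CDiag r k l)
    (hm : rn d = m) :
    ∃! t : CDiag r k m × CDiag r m m × CDiag r m l,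
      IsNormUp t.1 ∧ IsPermDiag t.2.1 ∧ IsNormDown t.2.2 ∧
      comp t.1 (comp t.2.1 t.2.2) = d := by
  have hB : (botMinSet d).card = m := (botMinSet_card d).trans hm
  have hT : (topMinSet d).card = m := (topMinSet_card d).trans hm
  refine ⟨⟨theD₁ d hT, theD₀ d hB hT, theD₂ d hB⟩,
    ⟨theD₁_isNormUp d hT, theD₀_isPermDiag d hB hT, theD₂_isNormDown d hB,
      theComp_eq d hB hT⟩, ?_⟩
  rintro ⟨d₁', d₀', d₂'⟩ ⟨hN1, hN0, hN2, hc⟩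
  obtain ⟨e1, e0, e2⟩ := triple_unique d hB hT d₁' d₀' d₂' hN1 hN0 hN2 hc
  exact Prod.ext e1 (Prod.ext e0 e2)
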